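/- Let (Λ, d) be a k-graph and v a vertex such that Λ¹v and vΛ¹ are both complete edges. If a path η in the 1-skeleton passes through v, then every path ν ∼ η also passes through v; moreover, the number of edges of ν with source v equals the number of edges of η with source v. -/

import Mathlib

open scoped Classical

/-- A `k`-colored directed graph: vertices, edges, range, source, and a color
(degree) in `Fin k` for each edge. -/
structure ColoredGraph (k : ℕ) where
  V : Type
  E : Type
  src : E → V
  rng : E → V
  color : E → Fin k

namespace ColoredGraph

variable {k : ℕ}

/-- A list of edges (listed from the source end) is composable starting at `v`. -/
def Composable (G : ColoredGraph k) : G.V → List G.E → Prop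
  | _, [] => True
  | v, e :: l => G.src e = v ∧ Composable G (G.rng e) l

/-- The final vertex reached by following a list of edges starting at `v`. -/
def endV (G : ColoredGraph k) : G.V → List G.E → G.V
  | v, [] => v
  | _, e :: l => endV G (G.rng e) l

/-- A finite path in `G` : an element of the path category `G*`.  The edges are
listed starting from the source (so the first edge of the list is the first,
innermost, edge of the path). -/
structure GPath (G : ColoredGraph k) where
  src : G.V
  edges : List G.E
  comp : G.Composable src edges

namespace GPath

variable {G : ColoredGraph k}

/-- The range of a path. -/
def rng (p : GPath G) : G.V := G.endV p.src p.edges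

/-- The color order of a path: the list of colors of its edges, starting from
the source end. -/
def colors (p : GPath G) : List (Fin k) := p.edges.map G.color

/-- The degree of a path, as an element of `ℕ^k`. -/
def deg (p : GPath G) : Fin k → ℕ := fun i => p.colors.count i

end GPath

theorem composable_append {G : ColoredGraph k} :
    ∀ (l₁ : List G.E) (v : G.V) (l₂ : List G.E),
      G.Composable v l₁ → G.Composable (G.endV v l₁) l₂ → G.Composable v (l₁ ++ l₂) := by
  intro l₁
  induction l₁ with
  | nil => intro v l₂ _ h₂; exact h₂
  | cons e l ih => intro v l₂ h₁ h₂; exact ⟨h₁.1, ih (G.rng e) l₂ h₁.2 h₂⟩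

theorem endV_append {G : ColoredGraph k} :
    ∀ (l₁ : List G.E) (v : G.V) (l₂ : List G.E),
      G.endV v (l₁ ++ l₂) = G.endV (G.endV v l₁) l₂ := by
  intro l₁
  induction l₁ with
  | nil => intro v l₂; rfl
  | cons e l ih => intro v l₂; exact ih (G.rng e) l₂

/-- Concatenation of composable paths. -/
def GPath.append {G : ColoredGraph k} (p q : GPath G) (h : p.rng = q.src) : GPath G :=
  ⟨p.src, p.edges ++ q.edges,
    composable_append p.edges p.src q.edges p.comp
      (by rw [show G.endV p.src p.edges = q.src from h]; exact q.comp)⟩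

/-- The path consisting of a single edge. -/
def edgePath (G : ColoredGraph k) (e : G.E) : GPath G :=
  ⟨G.src e, [e], by exact ⟨rfl, True.intro⟩⟩

/-- The relation preserves range, source and degree. -/
def PreservesRSD (G : ColoredGraph k) (rel : GPath G → GPath G → Prop) : Prop :=
  ∀ p q : GPath G, rel p q → p.src = q.src ∧ p.rng = q.rng ∧ p.deg = q.deg

/-- (KG0): the relation respects concatenation of paths. -/
def KG0 (G : ColoredGraph k) (rel : GPath G → GPath G → Prop) : Prop :=
  ∀ (p₁ p₂ q₁ q₂ : GPath G) (h : p₁.rng = p₂.src) (h' : q₁.rng = q₂.src),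
    rel p₁ q₁ → rel p₂ q₂ → rel (p₁.append p₂ h) (q₁.append q₂ h')

/-- (KG4): for each path and each permutation of its color order there is a
unique equivalent path with the permuted color order. -/
def KG4 (G : ColoredGraph k) (rel : GPath G → GPath G → Prop) : Prop :=
  ∀ (p : GPath G) (c : List (Fin k)), List.Perm c p.colors →
    ∃! q : GPath G, rel q p ∧ q.colors = c

/-- (KG1): distinct edges are inequivalent. -/
def KG1 (G : ColoredGraph k) (rel : GPath G → GPath G → Prop) : Prop :=
  ∀ e f : G.E, rel (edgePath G e) (edgePath G f) ↔ e = f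

/-- (KG2): completeness for bi-colored paths. -/
def KG2 (G : ColoredGraph k) (rel : GPath G → GPath G → Prop) : Prop :=
  ∀ (p : GPath G) (i j : Fin k), p.colors = [i, j] →
    ∃! q : GPath G, rel p q ∧ q.colors = [j, i]

/-- An equivalence relation, together with `KG0` and `KG4`, presents a `k`-graph. -/
def IsKGraphRel (G : ColoredGraph k) (rel : GPath G → GPath G → Prop) : Prop :=
  Equivalence rel ∧ PreservesRSD G rel ∧ KG0 G rel ∧ KG4 G rel

/-- Every vertex receives an edge of every color. -/
def SourceFree (G : ColoredGraph k) : Prop :=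
  ∀ (v : G.V) (i : Fin k), ∃ e : G.E, G.rng e = v ∧ G.color e = i

/-- Every vertex receives finitely many edges of each color. -/
def RowFinite (G : ColoredGraph k) : Prop :=
  ∀ (v : G.V) (i : Fin k), Set.Finite {e : G.E | G.rng e = v ∧ G.color e = i}

/-- `q` is obtained from `p` by replacing the initial (inner) two-edge subpath by
an equivalent two-edge path with transposed colors. -/
def SwapInner (G : ColoredGraph k) (rel : GPath G → GPath G → Prop) (p q : GPath G) : Prop :=
  ∃ (a b w : GPath G) (ha : a.rng = w.src) (hb : b.rng = w.src),
    a.edges.length = 2 ∧ b.colors = a.colors.reverse ∧ rel a b ∧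
    p = a.append w ha ∧ q = b.append w hb

/-- `q` is obtained from `p` by replacing the final (outer) two-edge subpath by
an equivalent two-edge path with transposed colors. -/
def SwapOuter (G : ColoredGraph k) (rel : GPath G → GPath G → Prop) (p q : GPath G) : Prop :=
  ∃ (w a b : GPath G) (ha : w.rng = a.src) (hb : w.rng = b.src),
    a.edges.length = 2 ∧ b.colors = a.colors.reverse ∧ rel a b ∧
    p = w.append a ha ∧ q = w.append b hb

/-- (KG3): associativity. For a tri-colored path with pairwise distinct colors,
the two standard routes of successive pairwise swaps give the same result. -/
def KG3 (G : ColoredGraph k) (rel : GPath G → GPath G → Prop) : Prop :=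
  ∀ (p : GPath G) (i j l : Fin k), i ≠ j → j ≠ l → i ≠ l →
    p.colors = [l, j, i] → ∀ p₁ p₂ p₃ q₁ q₂ q₃ : GPath G,
      SwapOuter G rel p p₁ → SwapInner G rel p₁ p₂ → SwapOuter G rel p₂ p₃ →
      SwapInner G rel p q₁ → SwapOuter G rel q₁ q₂ → SwapInner G rel q₂ q₃ → p₃ = q₃

/-- `w ≤ v` : there is a path from `v` to `w` (source `v`, range `w`). -/
def LeV (G : ColoredGraph k) (v w : G.V) : Prop :=
  ∃ p : GPath G, p.src = v ∧ p.rng = w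

theorem LeV_extend {G : ColoredGraph k} {v : G.V} (e : G.E)
    (h : LeV G v (G.src e)) : LeV G v (G.rng e) := by
  obtain ⟨p, hs, hr⟩ := h
  refine ⟨p.append (edgePath G e) hr, hs, ?_⟩
  show G.endV p.src (p.edges ++ [e]) = G.rng e
  exact (endV_append p.edges p.src [e]).trans rfl

/-- A complete edge from `u` to `w`: exactly one edge of each color, all with
source `u` and range `w`, closed under commuting squares. -/
def IsCompleteEdge (G : ColoredGraph k) (rel : GPath G → GPath G → Prop)
    (E : Set G.E) (u w : G.V) : Prop :=
  (∀ i : Fin k, ∃! e : G.E, e ∈ E ∧ G.color e = i) ∧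
  (∀ e ∈ E, G.src e = u ∧ G.rng e = w) ∧
  (∀ e ∈ E, ∀ a b f' : G.E, ∀ p q : GPath G,
    ((p.edges = [a, e] ∧ q.edges = [b, f']) ∨ (p.edges = [e, a] ∧ q.edges = [f', b])) →
    rel p q → f' ∈ E)

/-- A set `T` of edges of the color of `f` is closed under being opposite to a
member in a commuting square whose other color differs from that of `f`. -/
def SqClosed (G : ColoredGraph k) (rel : GPath G → GPath G → Prop)
    (f : G.E) (T : Set G.E) : Prop :=
  ∀ g ∈ T, ∀ (e a b : G.E) (p q : GPath G),
    G.color a = G.color b → G.color a ≠ G.color f → G.color e = G.color f →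
    ((p.edges = [g, a] ∧ q.edges = [b, e]) ∨ (p.edges = [a, g] ∧ q.edges = [e, b])) →
    rel p q → e ∈ T

theorem GPath.ext' {G : ColoredGraph k} {p q : GPath G}
    (h1 : p.src = q.src) (h2 : p.edges = q.edges) : p = q := by
  obtain ⟨ps, pe, pc⟩ := p
  obtain ⟨qs, qe, qc⟩ := q
  simp only at h1 h2
  subst h1; subst h2; rfl

theorem list_len_two {α : Type*} {l : List α} (h : l.length = 2) : ∃ a b, l = [a, b] := by
  match l, h with
  | [a, b], _ => exact ⟨a, b, rfl⟩

/-- If some edge of a composable list has range `v`, then either some edge has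
source `v` or the list ends at `v`. -/
theorem mem_rng_cases {G : ColoredGraph k} {v : G.V} :
    ∀ (l : List G.E) (x : G.V), G.Composable x l → ∀ e ∈ l, G.rng e = v →
      (∃ f ∈ l, G.src f = v) ∨ G.endV x l = v := by
  intro l
  induction l with
  | nil => intro x _ e he; exact absurd he List.not_mem_nil
  | cons g t ih =>
    intro x hc e he hrv
    rcases List.mem_cons.1 he with he | he
    · subst he
      cases t with
      | nil => right; exact hrv
      | cons f t' =>
        left
        exact ⟨f, List.mem_cons_of_mem _ List.mem_cons_self, hc.2.1.trans hrv⟩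
    · rcases ih (G.rng g) hc.2 e he hrv with ⟨f, hf, hfs⟩ | hend
      · exact Or.inl ⟨f, List.mem_cons_of_mem _ hf, hfs⟩
      · exact Or.inr hend

/-- A nonempty list contains an edge whose range is the final vertex. -/
theorem exists_rng_endV {G : ColoredGraph k} :
    ∀ (l : List G.E) (x : G.V), l ≠ [] → ∃ e ∈ l, G.rng e = G.endV x l := by
  intro l
  induction l with
  | nil => intro x h; exact absurd rfl h
  | cons g t ih =>
    intro x _
    cases t with
    | nil => exact ⟨g, List.mem_cons_self, rfl⟩
    | cons f t' =>
      obtain ⟨e, he, hre⟩ := ih (G.rng g) (by simp)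
      exact ⟨e, List.mem_cons_of_mem _ he, hre⟩

/-- Core lemma: for every permutation of the color order of `p` there is an
equivalent path with that color order and the same number of edges with
source `v`. -/
theorem swap_chain {G : ColoredGraph k} {rel : GPath G → GPath G → Prop}
    (hK : IsKGraphRel G rel) (v : G.V)
    (hin : ∀ e a b f' : G.E, ∀ p q : GPath G, G.rng e = v →
      ((p.edges = [a, e] ∧ q.edges = [b, f']) ∨ (p.edges = [e, a] ∧ q.edges = [f', b])) →
      rel p q → G.rng f' = v) :
    ∀ {c d : List (Fin k)}, List.Perm c d → ∀ p : GPath G, p.colors = d →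
      ∃ ρ : GPath G, rel ρ p ∧ ρ.colors = c ∧
        ρ.edges.countP (fun e => decide (G.src e = v)) =
        p.edges.countP (fun e => decide (G.src e = v)) := by
  intro c d hperm
  induction hperm with
  | nil => intro p hp; exact ⟨p, hK.1.refl p, hp, rfl⟩
  | @cons x l₁ l₂ hl ih =>
    rintro ⟨ps, pe, pc⟩ hp
    cases pe with
    | nil => simp [GPath.colors] at hp
    | cons e t =>
      simp only [GPath.colors, List.map_cons, List.cons.injEq] at hp
      set p' : GPath G := ⟨G.rng e, t, pc.2⟩ with hp'def
      obtain ⟨ρ', hrel', hcol', hcount'⟩ := ih p' hp.2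
      have hsrc' : ρ'.src = G.rng e := (hK.2.1 ρ' p' hrel').1
      have hlink : (edgePath G e).rng = ρ'.src := hsrc'.symm
      refine ⟨(edgePath G e).append ρ' hlink, ?_, ?_, ?_⟩
      · have hpeq : (edgePath G e).append p' rfl = (⟨ps, e :: t, pc⟩ : GPath G) :=
          GPath.ext' pc.1 rfl
        have := hK.2.2.1 (edgePath G e) ρ' (edgePath G e) p' hlink rfl
          (hK.1.refl _) hrel'
        rwa [hpeq] at this
      · show ((e :: ρ'.edges).map G.color) = x :: l₁
        simp [hp.1, ← hcol', GPath.colors]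
      · show ((e :: ρ'.edges).countP _) = _
        simp [List.countP_cons, hcount']
        rfl
  | swap x y l =>
    rintro ⟨ps, pe, pc⟩ hp
    match pe, pc, hp with
    | a :: b :: t, pc, hp =>
      simp only [GPath.colors, List.map_cons, List.cons.injEq] at hp
      set m : GPath G := ⟨ps, [a, b], ⟨pc.1, pc.2.1, trivial⟩⟩ with hmdef
      set rest : GPath G := ⟨G.rng b, t, pc.2.2⟩ with hrestdef
      have hmcol : m.colors = [x, y] := by
        simp [GPath.colors, hmdef, hp.1, hp.2.1]
      obtain ⟨m', ⟨hrelm, hcolm⟩, _⟩ := hK.2.2.2 m [y, x]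
        (by rw [hmcol]; exact List.Perm.swap x y [])
      obtain ⟨b', a', hed⟩ := list_len_two
        (by have := congrArg List.length hcolm; simpa [GPath.colors] using this)
      have hRSD := hK.2.1 m' m hrelm
      obtain ⟨ms, me, mc⟩ := m'
      simp only at hed
      subst hed
      have hms : ms = ps := hRSD.1
      have hlink : GPath.rng ⟨ms, [b', a'], mc⟩ = rest.src := hRSD.2.1
      have hpeq : m.append rest rfl = (⟨ps, a :: b :: t, pc⟩ : GPath G) :=
        GPath.ext' rfl rfl
      refine ⟨(⟨ms, [b', a'], mc⟩ : GPath G).append rest hlink, ?_, ?_, ?_⟩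
      · have := hK.2.2.1 _ rest m rest hlink rfl hrelm (hK.1.refl rest)
        rwa [hpeq] at this
      · show (([b', a'] ++ t).map G.color) = y :: x :: l
        have hcb' : G.color b' = y ∧ G.color a' = x := by
          simpa [GPath.colors] using hcolm
        simp [hcb'.1, hcb'.2, hp.2.2]
      · show (([b', a'] ++ t).countP _) = ((a :: b :: t).countP _)
        have hsb' : G.src b' = G.src a := by rw [mc.1, hms, pc.1]
        have hsa' : G.src a' = G.rng b' := mc.2.1
        have hsb : G.src b = G.rng a := pc.2.1
        have hiff : G.rng b' = v ↔ G.rng a = v := by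
          constructor
          · intro h
            exact hin b' a' b a (⟨ms, [b', a'], mc⟩ : GPath G) m h
              (Or.inr ⟨rfl, rfl⟩) hrelm
          · intro h
            exact hin a b a' b' m (⟨ms, [b', a'], mc⟩ : GPath G) h
              (Or.inr ⟨rfl, rfl⟩) (hK.1.symm hrelm)
        have h1 : decide (G.src b' = v) = decide (G.src a = v) := by
          simp [hsb']
        have h2 : decide (G.src a' = v) = decide (G.src b = v) := by
          rw [hsa', hsb]
          exact decide_eq_decide.mpr hiff
        simp only [List.countP_cons, List.countP_append, List.countP_nil,
          List.cons_append, List.nil_append]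
        rw [h1, h2]
  | trans h1 h2 ih1 ih2 =>
    intro p hp
    obtain ⟨ρ₂, hrel₂, hcol₂, hcount₂⟩ := ih2 p hp
    obtain ⟨ρ₁, hrel₁, hcol₁, hcount₁⟩ := ih1 ρ₂ hcol₂
    exact ⟨ρ₁, hK.1.trans hrel₁ hrel₂, hcol₁, hcount₁.trans hcount₂⟩

/-- If the incoming and outgoing edge sets of `v` are complete edges, then any
path equivalent to a path passing through `v` also passes through `v`, and
equivalent paths have the same number of edges with source `v`. -/
theorem equivalent_paths_through_vertex {k : ℕ} (G : ColoredGraph k)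
    (rel : GPath G → GPath G → Prop) (hK : IsKGraphRel G rel)
    (v w u : G.V)
    (hout : IsCompleteEdge G rel {e : G.E | G.src e = v} v w)
    (hin : IsCompleteEdge G rel {e : G.E | G.rng e = v} u v)
    (eta : GPath G) (hpass : ∃ e ∈ eta.edges, G.src e = v ∨ G.rng e = v) :
    ∀ nu : GPath G, rel nu eta →
      (∃ e ∈ nu.edges, G.src e = v ∨ G.rng e = v) ∧
      nu.edges.countP (fun e => decide (G.src e = v)) =
        eta.edges.countP (fun e => decide (G.src e = v)) := by
  intro nu hrel
  have hin' : ∀ e a b f' : G.E, ∀ p q : GPath G, G.rng e = v →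
      ((p.edges = [a, e] ∧ q.edges = [b, f']) ∨ (p.edges = [e, a] ∧ q.edges = [f', b])) →
      rel p q → G.rng f' = v := by
    intro e a b f' p q he hsq hr
    exact hin.2.2 e he a b f' p q hsq hr
  have hRSD := hK.2.1 nu eta hrel
  have hperm : nu.colors.Perm eta.colors :=
    List.perm_iff_count.2 fun i => congrFun hRSD.2.2 i
  obtain ⟨ρ, hrelρ, hcolρ, hcountρ⟩ := swap_chain hK v hin' hperm eta rfl
  obtain ⟨q0, _, huniq⟩ := hK.2.2.2 eta nu.colors hperm
  have hnuρ : nu = ρ := (huniq nu ⟨hrel, rfl⟩).trans (huniq ρ ⟨hrelρ, hcolρ⟩).symm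
  have hcount : nu.edges.countP (fun e => decide (G.src e = v)) =
      eta.edges.countP (fun e => decide (G.src e = v)) := by
    rw [hnuρ]; exact hcountρ
  refine ⟨?_, hcount⟩
  by_cases hsrc : ∃ f ∈ eta.edges, G.src f = v
  · have hpos : 0 < eta.edges.countP (fun e => decide (G.src e = v)) := by
      obtain ⟨f, hf, hfs⟩ := hsrc
      exact List.countP_pos_iff.2 ⟨f, hf, by simp [hfs]⟩
    rw [← hcount] at hpos
    obtain ⟨f, hf, hfs⟩ := List.countP_pos_iff.1 hpos
    exact ⟨f, hf, Or.inl (by simpa using hfs)⟩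
  · obtain ⟨e, he, hev⟩ := hpass
    have hrv : G.rng e = v := by
      rcases hev with h | h
      · exact absurd ⟨e, he, h⟩ hsrc
      · exact h
    have hend : eta.rng = v := by
      rcases mem_rng_cases eta.edges eta.src eta.comp e he hrv with h | h
      · exact absurd h hsrc
      · exact h
    have hnuend : nu.rng = v := hRSD.2.1.trans hend
    have hne : nu.edges ≠ [] := by
      intro h0
      have h1 : nu.colors = [] := by simp [GPath.colors, h0]
      have h2 : eta.colors = [] := by
        have hp2 := hperm
        rw [h1] at hp2
        exact hp2.symm.eq_nil
      have : eta.edges = [] := by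
        have := congrArg List.length h2
        simpa [GPath.colors] using this
      rw [this] at he
      exact List.not_mem_nil he
    obtain ⟨f, hf, hrf⟩ := exists_rng_endV nu.edges nu.src hne
    exact ⟨f, hf, Or.inr (hrf.trans hnuend)⟩

end ColoredGraph
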